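/- The pushforward of the measure α·d (density 2(Im u)² with respect to Haar measure on the unit circle) under the map u ↦ u + u⁻¹ = 2·Re(u) is the standard semicircle distribution on [-2, 2]. -/

import Mathlib

open MeasureTheory Complex Real Set
open scoped ENNReal

/-- Haar probability measure on the unit circle in ℂ. -/
noncomputable def haarCircle : Measure ℂ :=
  (ENNReal.ofReal (2 * π))⁻¹ •
    Measure.map (fun θ : ℝ => Complex.exp (θ * Complex.I))
      (volume.restrict (Set.Ioc 0 (2 * π)))

/-- The standard semicircle distribution on [-2, 2]. -/
noncomputable def semicircle : Measure ℝ :=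
  (volume.restrict (Set.Icc (-2 : ℝ) 2)).withDensity
    (fun x => ENNReal.ofReal ((1 / (2 * π)) * Real.sqrt (4 - x ^ 2)))

/-- 1D change of variables for lower Lebesgue integrals. -/
lemma lintegral_image_1d {s : Set ℝ} {f f' : ℝ → ℝ} (hs : MeasurableSet s)
    (hf' : ∀ x ∈ s, HasDerivWithinAt f (f' x) s x) (hf : Set.InjOn f s) (g : ℝ → ℝ≥0∞) :
    ∫⁻ x in f '' s, g x = ∫⁻ x in s, ENNReal.ofReal |f' x| * g (f x) := by
  simpa only [ContinuousLinearMap.det_toSpanSingleton] using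
    lintegral_image_eq_lintegral_abs_det_fderiv_mul volume hs
      (fun x hx => (hf' x hx).hasFDerivWithinAt) hf g

lemma map_withDensity_comm {α β : Type*} [MeasurableSpace α] [MeasurableSpace β]
    (μ : Measure α) {e : α → β} (he : Measurable e) {g : β → ℝ≥0∞} (hg : Measurable g) :
    (Measure.map e μ).withDensity g = Measure.map e (μ.withDensity fun a => g (e a)) := by
  ext s hs
  rw [withDensity_apply _ hs, Measure.map_apply he hs,
    withDensity_apply _ (he hs), setLIntegral_map hs hg he]

lemma cos_mem_Ioo {θ : ℝ} (h : θ ∈ Ioo 0 π) : Real.cos θ ∈ Ioo (-1 : ℝ) 1 := by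
  constructor
  · have := Real.strictAntiOn_cos ⟨h.1.le, h.2.le⟩ (Set.right_mem_Icc.2 Real.pi_pos.le) h.2
    simpa [Real.cos_pi] using this
  · have := Real.strictAntiOn_cos (Set.left_mem_Icc.2 Real.pi_pos.le) ⟨h.1.le, h.2.le⟩ h.1
    simpa [Real.cos_zero] using this

lemma image_arccos_half : (fun x : ℝ => Real.arccos (x / 2)) '' Ioo (-2 : ℝ) 2 = Ioo 0 π := by
  ext θ
  constructor
  · rintro ⟨x, hx, rfl⟩
    have h2 : x / 2 < 1 := by linarith [hx.2]
    refine ⟨Real.arccos_pos.2 h2, lt_of_le_of_ne (Real.arccos_le_pi _) ?_⟩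
    intro h
    rw [Real.arccos_eq_pi] at h
    linarith [hx.1]
  · intro hθ
    have hc := cos_mem_Ioo hθ
    refine ⟨2 * Real.cos θ, ⟨by linarith [hc.1], by linarith [hc.2]⟩, ?_⟩
    show Real.arccos (2 * Real.cos θ / 2) = θ
    rw [mul_div_cancel_left₀ _ (two_ne_zero), Real.arccos_cos hθ.1.le hθ.2.le]

lemma image_arccos_half' :
    (fun x : ℝ => 2 * π - Real.arccos (x / 2)) '' Ioo (-2 : ℝ) 2 = Ioo π (2 * π) := by
  have h : (fun x : ℝ => 2 * π - Real.arccos (x / 2)) =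
      (fun t => 2 * π - t) ∘ (fun x : ℝ => Real.arccos (x / 2)) := rfl
  rw [h, Set.image_comp, image_arccos_half, Set.image_const_sub_Ioo]
  congr 1 <;> ring

lemma injOn_arccos_half : Set.InjOn (fun x : ℝ => Real.arccos (x / 2)) (Ioo (-2 : ℝ) 2) := by
  intro x hx y hy h
  have := congrArg Real.cos h
  rw [Real.cos_arccos (by linarith [hx.1]) (by linarith [hx.2]),
    Real.cos_arccos (by linarith [hy.1]) (by linarith [hy.2])] at this
  linarith

lemma injOn_arccos_half' :
    Set.InjOn (fun x : ℝ => 2 * π - Real.arccos (x / 2)) (Ioo (-2 : ℝ) 2) := by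
  intro x hx y hy h
  dsimp only at h
  exact injOn_arccos_half hx hy (by linarith)

lemma hasDerivAt_arccos_half {x : ℝ} (hx : x ∈ Ioo (-2 : ℝ) 2) :
    HasDerivAt (fun y : ℝ => Real.arccos (y / 2))
      (-(1 / Real.sqrt (1 - (x / 2) ^ 2)) * (1 / 2)) x := by
  have h1 : x / 2 ≠ -1 := by
    intro h; rw [div_eq_iff (by norm_num : (2:ℝ) ≠ 0)] at h; linarith [hx.1]
  have h2 : x / 2 ≠ 1 := by
    intro h; rw [div_eq_iff (by norm_num : (2:ℝ) ≠ 0)] at h; linarith [hx.2]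
  simpa [Function.comp_def] using
    (Real.hasDerivAt_arccos h1 h2).comp x ((hasDerivAt_id x).div_const 2)

lemma abs_deriv_arccos_half {x : ℝ} (hx : x ∈ Ioo (-2 : ℝ) 2) :
    |(-(1 / Real.sqrt (1 - (x / 2) ^ 2)) * (1 / 2))| = 1 / Real.sqrt (4 - x ^ 2) := by
  have h4 : (0 : ℝ) < 4 - x ^ 2 := by nlinarith [hx.1, hx.2]
  have hs4 : Real.sqrt (1 - (x / 2) ^ 2) = Real.sqrt (4 - x ^ 2) / 2 := by
    rw [show (1 - (x / 2) ^ 2) = (4 - x ^ 2) * (1 / 2) ^ 2 by ring, Real.sqrt_mul h4.le,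
      Real.sqrt_sq (by norm_num : (0:ℝ) ≤ 1 / 2)]
    ring
  have hr : (0 : ℝ) < Real.sqrt (4 - x ^ 2) := Real.sqrt_pos.2 h4
  have hnn : (0:ℝ) ≤ 1 / (Real.sqrt (4 - x ^ 2) / 2) * (1 / 2) := by positivity
  rw [hs4, neg_mul, abs_neg, _root_.abs_of_nonneg hnn]
  field_simp

theorem map_alpha_semicircle :
    Measure.map (fun u : ℂ => 2 * u.re)
      (haarCircle.withDensity (fun u => ENNReal.ofReal (2 * u.im ^ 2))) = semicircle := by
  have hπ : 0 < π := Real.pi_pos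
  have he : Measurable (fun θ : ℝ => Complex.exp (θ * Complex.I)) :=
    (Complex.continuous_exp.comp (Complex.continuous_ofReal.mul continuous_const)).measurable
  have hα : Measurable (fun u : ℂ => ENNReal.ofReal (2 * u.im ^ 2)) :=
    ENNReal.measurable_ofReal.comp
      ((continuous_const.mul (Complex.continuous_im.pow 2)).measurable)
  have h2re : Measurable (fun u : ℂ => 2 * u.re) :=
    (continuous_const.mul Complex.continuous_re).measurable
  have hcos : Measurable (fun θ : ℝ => 2 * Real.cos θ) :=
    (continuous_const.mul Real.continuous_cos).measurable
  rw [haarCircle, withDensity_smul_measure, map_withDensity_comm _ he hα, Measure.map_smul,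
    Measure.map_map h2re he]
  have hcomp : ((fun u : ℂ => 2 * u.re) ∘ fun θ : ℝ => Complex.exp (θ * Complex.I)) =
      fun θ : ℝ => 2 * Real.cos θ := by
    funext θ; simp [Function.comp, Complex.exp_ofReal_mul_I_re]
  have hdens : (fun θ : ℝ => ENNReal.ofReal (2 * (Complex.exp (θ * Complex.I)).im ^ 2)) =
      fun θ : ℝ => ENNReal.ofReal (2 * Real.sin θ ^ 2) := by
    funext θ; rw [Complex.exp_ofReal_mul_I_im]
  rw [hcomp, hdens]
  ext s hs
  -- abbreviations
  set c : ℝ≥0∞ := (ENNReal.ofReal (2 * π))⁻¹ with hc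
  have hc_ne_top : c ≠ ⊤ :=
    ENNReal.inv_ne_top.2 (ENNReal.ofReal_pos.2 (by positivity : (0:ℝ) < 2 * π)).ne'
  -- the common integrand
  have hIoc : (Ioc (0 : ℝ) (2 * π)) =ᵐ[volume] ((Ioo 0 π ∪ Ioo π (2 * π) : Set ℝ)) := by
    rw [← Set.Ioc_union_Ioc_eq_Ioc hπ.le (by linarith : π ≤ 2 * π)]
    exact (Ioo_ae_eq_Ioc (μ := volume)).symm.union (Ioo_ae_eq_Ioc (μ := volume)).symm
  have hdisj : Disjoint (Ioo (0 : ℝ) π) (Ioo π (2 * π)) :=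
    Set.disjoint_left.2 fun a ha hb => lt_asymm ha.2 hb.1
  -- define integrands
  set G : ℝ → ℝ≥0∞ := fun θ =>
    s.indicator (fun _ => (1 : ℝ≥0∞)) (2 * Real.cos θ) * ENNReal.ofReal (2 * Real.sin θ ^ 2)
    with hG
  set H : ℝ → ℝ≥0∞ := fun x =>
    s.indicator (fun _ => (1 : ℝ≥0∞)) x * ENNReal.ofReal (Real.sqrt (4 - x ^ 2) / 2) with hH
  have hHmeas : Measurable H := by
    exact (measurable_const.indicator hs).mul
      (ENNReal.measurable_ofReal.comp
        (((continuous_sqrt.comp (continuous_const.sub (continuous_pow 2))).div_const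
          2).measurable))
  -- change of variables on each half
  have key : ∀ (f f' : ℝ → ℝ),
      (∀ x ∈ Ioo (-2 : ℝ) 2, HasDerivWithinAt f (f' x) (Ioo (-2 : ℝ) 2) x) →
      Set.InjOn f (Ioo (-2 : ℝ) 2) →
      (∀ x ∈ Ioo (-2 : ℝ) 2, |f' x| = 1 / Real.sqrt (4 - x ^ 2)) →
      (∀ x ∈ Ioo (-2 : ℝ) 2, Real.cos (f x) = x / 2) →
      (∀ x ∈ Ioo (-2 : ℝ) 2, Real.sin (f x) ^ 2 = 1 - (x / 2) ^ 2) →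
      ∫⁻ θ in f '' Ioo (-2 : ℝ) 2, G θ = ∫⁻ x in Ioo (-2 : ℝ) 2, H x := by
    intro f f' hderiv hinj habs hcosf hsinf
    rw [lintegral_image_1d measurableSet_Ioo hderiv hinj G]
    refine setLIntegral_congr_fun measurableSet_Ioo ?_
    intro x hx
    have h4 : (0 : ℝ) < 4 - x ^ 2 := by nlinarith [hx.1, hx.2]
    have hr : (0 : ℝ) < Real.sqrt (4 - x ^ 2) := Real.sqrt_pos.2 h4
    have hval : (1 / Real.sqrt (4 - x ^ 2)) * (2 * (1 - (x / 2) ^ 2)) =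
        Real.sqrt (4 - x ^ 2) / 2 := by
      have h44 : Real.sqrt (4 - x ^ 2) * Real.sqrt (4 - x ^ 2) = 4 - x ^ 2 :=
        Real.mul_self_sqrt h4.le
      field_simp
      nlinarith [h44]
    rw [hG, hH]
    simp only [habs x hx, hcosf x hx, hsinf x hx]
    rw [show 2 * (x / 2) = x by ring]
    rw [mul_comm (s.indicator _ x), ← mul_assoc, ← ENNReal.ofReal_mul (by positivity), hval,
      mul_comm]
  -- the two halves
  have deriv2 : ∀ x ∈ Ioo (-2 : ℝ) 2,
      HasDerivWithinAt (fun y : ℝ => 2 * π - Real.arccos (y / 2))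
        (-(-(1 / Real.sqrt (1 - (x / 2) ^ 2)) * (1 / 2))) (Ioo (-2 : ℝ) 2) x :=
    fun x hx => ((hasDerivAt_arccos_half hx).const_sub (2 * π)).hasDerivWithinAt
  have half1 : ∫⁻ θ in Ioo (0 : ℝ) π, G θ = ∫⁻ x in Ioo (-2 : ℝ) 2, H x := by
    rw [← image_arccos_half]
    refine key _ _ (fun x hx => (hasDerivAt_arccos_half hx).hasDerivWithinAt) injOn_arccos_half
      (fun x hx => abs_deriv_arccos_half hx)
      (fun x hx => Real.cos_arccos (by linarith [hx.1]) (by linarith [hx.2]))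
      (fun x hx => ?_)
    rw [Real.sin_arccos, Real.sq_sqrt (by nlinarith [hx.1, hx.2] : (0:ℝ) ≤ 1 - (x / 2) ^ 2)]
  have half2 : ∫⁻ θ in Ioo π (2 * π), G θ = ∫⁻ x in Ioo (-2 : ℝ) 2, H x := by
    rw [← image_arccos_half']
    refine key _ _ deriv2 injOn_arccos_half' (fun x hx => ?_) (fun x hx => ?_) (fun x hx => ?_)
    · rw [abs_neg]; exact abs_deriv_arccos_half hx
    · rw [Real.cos_two_pi_sub, Real.cos_arccos (by linarith [hx.1]) (by linarith [hx.2])]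
    · rw [Real.sin_two_pi_sub, neg_pow, Real.sin_arccos,
        Real.sq_sqrt (by nlinarith [hx.1, hx.2] : (0:ℝ) ≤ 1 - (x / 2) ^ 2)]
      ring
  -- compute the LHS
  have hpre : MeasurableSet ((fun θ : ℝ => 2 * Real.cos θ) ⁻¹' s) := hcos hs
  have hlhs :
      (c • Measure.map (fun θ : ℝ => 2 * Real.cos θ)
        ((volume.restrict (Set.Ioc 0 (2 * π))).withDensity
          fun θ : ℝ => ENNReal.ofReal (2 * Real.sin θ ^ 2))) s =
      c * ((∫⁻ x in Ioo (-2 : ℝ) 2, H x) + ∫⁻ x in Ioo (-2 : ℝ) 2, H x) := by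
    rw [Measure.smul_apply, smul_eq_mul, Measure.map_apply hcos hs,
      withDensity_apply _ hpre]
    congr 1
    have hind : ((fun θ : ℝ => 2 * Real.cos θ) ⁻¹' s).indicator
        (fun θ : ℝ => ENNReal.ofReal (2 * Real.sin θ ^ 2)) = G := by
      funext θ
      by_cases h : 2 * Real.cos θ ∈ s <;>
        simp [hG, Set.indicator, Set.mem_preimage, h]
    calc ∫⁻ θ in (fun θ : ℝ => 2 * Real.cos θ) ⁻¹' s,
          ENNReal.ofReal (2 * Real.sin θ ^ 2) ∂(volume.restrict (Set.Ioc 0 (2 * π)))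
        = ∫⁻ θ, ((fun θ : ℝ => 2 * Real.cos θ) ⁻¹' s).indicator
            (fun θ : ℝ => ENNReal.ofReal (2 * Real.sin θ ^ 2)) θ
            ∂(volume.restrict (Set.Ioc 0 (2 * π))) := by
          rw [lintegral_indicator hpre]
      _ = ∫⁻ θ in Ioo 0 π ∪ Ioo π (2 * π), G θ := by
          rw [hind, Measure.restrict_congr_set hIoc]
      _ = (∫⁻ θ in Ioo (0:ℝ) π, G θ) + ∫⁻ θ in Ioo π (2 * π), G θ :=
          lintegral_union measurableSet_Ioo hdisj
      _ = _ := by rw [half1, half2]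
  rw [hlhs]
  -- compute the RHS
  have hrhs : semicircle s = ∫⁻ x in Ioo (-2 : ℝ) 2,
      s.indicator (fun _ => (1 : ℝ≥0∞)) x *
        ENNReal.ofReal ((1 / (2 * π)) * Real.sqrt (4 - x ^ 2)) := by
    rw [semicircle, withDensity_apply _ hs]
    have hind : s.indicator
        (fun x : ℝ => ENNReal.ofReal ((1 / (2 * π)) * Real.sqrt (4 - x ^ 2))) =
        fun x => s.indicator (fun _ => (1 : ℝ≥0∞)) x *
          ENNReal.ofReal ((1 / (2 * π)) * Real.sqrt (4 - x ^ 2)) := by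
      funext x
      by_cases h : x ∈ s <;> simp [Set.indicator, h]
    calc ∫⁻ x in s, ENNReal.ofReal ((1 / (2 * π)) * Real.sqrt (4 - x ^ 2))
          ∂(volume.restrict (Set.Icc (-2 : ℝ) 2))
        = ∫⁻ x, s.indicator
            (fun x : ℝ => ENNReal.ofReal ((1 / (2 * π)) * Real.sqrt (4 - x ^ 2))) x
            ∂(volume.restrict (Set.Icc (-2 : ℝ) 2)) := by
          rw [lintegral_indicator hs]
      _ = _ := by
          rw [hind, Measure.restrict_congr_set (Ioo_ae_eq_Icc (μ := volume)).symm]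
  rw [hrhs]
  -- combine
  rw [← lintegral_add_left hHmeas, ← lintegral_const_mul' c _ hc_ne_top]
  refine setLIntegral_congr_fun measurableSet_Ioo ?_
  intro x hx
  have h4 : (0 : ℝ) ≤ 4 - x ^ 2 := by nlinarith [hx.1, hx.2]
  by_cases h : x ∈ s
  · have hone : s.indicator (fun _ => (1 : ℝ≥0∞)) x = 1 := Set.indicator_of_mem h _
    rw [hH]
    simp only [hone, one_mul]
    rw [← ENNReal.ofReal_add (by positivity) (by positivity),
      show Real.sqrt (4 - x ^ 2) / 2 + Real.sqrt (4 - x ^ 2) / 2 = Real.sqrt (4 - x ^ 2) by ring,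
      hc, ← ENNReal.ofReal_inv_of_pos (by linarith : (0:ℝ) < 2 * π),
      ← ENNReal.ofReal_mul (by positivity), one_div]
  · have hzero : s.indicator (fun _ => (1 : ℝ≥0∞)) x = 0 := Set.indicator_of_notMem h _
    rw [hH]
    simp only [hzero, zero_mul, add_zero, mul_zero]
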